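/- Let λ, λ' be nonzero complex numbers with |λ| > 1 such that λ^m (λ')^n ≠ 1 for every pair of integers (m,n) ≠ (0,0). Then the closure of the multiplicative subgroup of ℂ* generated by λ and λ' contains a one-real-parameter subgroup {exp(a r) : r ∈ ℝ} for some nonzero complex number a. -/

import Mathlib

open Filter Topology

lemma line_in_closure (H : Submodule ℤ ℂ)
    (hnd : ∀ ε : ℝ, 0 < ε → ∃ x ∈ H, x ≠ 0 ∧ ‖x‖ < ε) :
    ∃ u : ℂ, ‖u‖ = 1 ∧ ∀ r : ℝ, (r : ℂ) * u ∈ closure (H : Set ℂ) := by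
  have hex : ∀ n : ℕ, ∃ x : ℂ, x ∈ H ∧ x ≠ 0 ∧ ‖x‖ < 1/(n+1) := by
    intro n
    obtain ⟨x, hx, hx0, hxn⟩ := hnd (1/(n+1)) (by positivity)
    exact ⟨x, hx, hx0, hxn⟩
  choose x hxH hx0 hxlt using hex
  have hnpos : ∀ n, (0:ℝ) < ‖x n‖ := fun n => norm_pos_iff.mpr (hx0 n)
  set u : ℕ → ℂ := fun n => (‖x n‖ : ℝ)⁻¹ • x n with hu
  have husph : ∀ n, u n ∈ Metric.sphere (0:ℂ) 1 := by
    intro n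
    have := (hnpos n).ne'
    simp only [u, Metric.mem_sphere, dist_zero_right, norm_smul, norm_inv, norm_norm]
    rw [inv_mul_cancel₀ this]
  obtain ⟨v, hv, φ, hφ, hconv⟩ := (isCompact_sphere (0:ℂ) 1).tendsto_subseq husph
  have hvnorm : ‖v‖ = 1 := by simpa using hv
  refine ⟨v, hvnorm, ?_⟩
  intro r
  -- the norms along the subsequence tend to 0
  have hs0 : Tendsto (fun n => ‖x (φ n)‖) atTop (𝓝 0) := by
    apply squeeze_zero (fun n => (hnpos (φ n)).le) (fun n => ?_)
      tendsto_one_div_add_atTop_nhds_zero_nat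
    calc ‖x (φ n)‖ ≤ 1/(φ n + 1) := (hxlt (φ n)).le
      _ ≤ 1/(n+1) := by
          apply one_div_le_one_div_of_le (by positivity)
          have : n ≤ φ n := hφ.le_apply
          have : (n:ℝ) ≤ (φ n : ℝ) := by exact_mod_cast this
          linarith
  set k : ℕ → ℤ := fun n => ⌊r / ‖x (φ n)‖⌋ with hk
  have hto : Tendsto (fun n => (k n : ℝ) * ‖x (φ n)‖) atTop (𝓝 r) := by
    rw [tendsto_iff_dist_tendsto_zero]
    apply squeeze_zero (fun n => dist_nonneg) (fun n => ?_) hs0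
    have hs := hnpos (φ n)
    have h1 : (k n : ℝ) ≤ r / ‖x (φ n)‖ := Int.floor_le _
    have h2 : r / ‖x (φ n)‖ < (k n : ℝ) + 1 := Int.lt_floor_add_one _
    rw [Real.dist_eq, abs_le]
    constructor
    · have : r < ((k n : ℝ) + 1) * ‖x (φ n)‖ := by
        rw [div_lt_iff₀ hs] at h2; linarith
      nlinarith
    · have : (k n : ℝ) * ‖x (φ n)‖ ≤ r := by
        rw [← le_div_iff₀ hs]; exact h1
      linarith [hs.le]
  have heq : ∀ n, (k n : ℂ) * x (φ n) = ((k n : ℝ) * ‖x (φ n)‖) • u (φ n) := by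
    intro n
    rw [hu]
    rw [smul_smul, mul_assoc, mul_inv_cancel₀ (hnpos (φ n)).ne', mul_one]
    rw [Complex.real_smul]
    push_cast
    ring
  have hlim : Tendsto (fun n => (k n : ℂ) * x (φ n)) atTop (𝓝 ((r : ℝ) • v)) := by
    simp only [heq]
    exact hto.smul hconv
  have hrv : (r : ℂ) * v = (r : ℝ) • v := Complex.real_smul.symm
  rw [hrv]
  exact mem_closure_of_tendsto hlim (Eventually.of_forall fun n => by
    simpa [zsmul_eq_mul] using H.smul_mem (k n) (hxH (φ n)))

theorem stmt_1 (lam lam' : ℂ) (hlam0 : lam ≠ 0) (hlam'0 : lam' ≠ 0)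
    (hlam : 1 < ‖lam‖)
    (h : ∀ m n : ℤ, lam ^ m * lam' ^ n = 1 → m = 0 ∧ n = 0) :
    ∃ a : ℂ, a ≠ 0 ∧
      ∀ r : ℝ, Complex.exp (a * r) ∈
        closure {z : ℂ | ∃ m n : ℤ, z = lam ^ m * lam' ^ n} := by
  set l : ℂ := Complex.log lam with hl
  set l' : ℂ := Complex.log lam' with hl'
  set c : ℂ := 2 * Real.pi * Complex.I with hc
  have hel : Complex.exp l = lam := Complex.exp_log hlam0
  have hel' : Complex.exp l' = lam' := Complex.exp_log hlam'0
  have hc0 : c ≠ 0 := by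
    simp [hc, Complex.ext_iff, Real.pi_ne_zero]
  set T : Set ℂ := {z : ℂ | ∃ m n : ℤ, z = lam ^ m * lam' ^ n} with hT
  set H : Submodule ℤ ℂ := Submodule.span ℤ {l, l', c} with hH
  -- exp maps H into T
  have hmaps : ∀ x ∈ H, Complex.exp x ∈ T := by
    intro x hx
    induction hx using Submodule.span_induction with
    | mem y hy =>
      rcases hy with rfl | rfl | rfl
      · exact ⟨1, 0, by simp [hel]⟩
      · exact ⟨0, 1, by simp [hel']⟩
      · refine ⟨0, 0, ?_⟩
        rw [zpow_zero, zpow_zero, mul_one, hc]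
        exact Complex.exp_two_pi_mul_I
    | zero => exact ⟨0, 0, by simp⟩
    | add y z _ _ hy hz =>
      obtain ⟨m, n, hmn⟩ := hy
      obtain ⟨m', n', hmn'⟩ := hz
      refine ⟨m + m', n + n', ?_⟩
      rw [Complex.exp_add, hmn, hmn', zpow_add₀ hlam0, zpow_add₀ hlam'0]
      ring
    | smul t y _ hy =>
      obtain ⟨m, n, hmn⟩ := hy
      refine ⟨m * t, n * t, ?_⟩
      rw [zsmul_eq_mul, Complex.exp_int_mul, hmn, mul_zpow, zpow_mul, zpow_mul]
  -- exp of closure of H lands in closure of T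
  have hexpcl : ∀ x ∈ closure (H : Set ℂ), Complex.exp x ∈ closure T := by
    intro x hx
    have h1 : Complex.exp x ∈ Complex.exp '' closure (H : Set ℂ) := ⟨x, hx, rfl⟩
    have h2 := image_closure_subset_closure_image (f := Complex.exp) Complex.continuous_exp h1
    have h3 : Complex.exp '' (H : Set ℂ) ⊆ T := by
      rintro _ ⟨y, hy, rfl⟩; exact hmaps y hy
    exact closure_mono h3 h2
  -- the three generators are ℤ-linearly independent
  have hindep : LinearIndependent ℤ ![l, l', c] := by
    rw [Fintype.linearIndependent_iff]
    intro g hg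
    have hsum : (g 0 : ℂ) * l + (g 1 : ℂ) * l' + (g 2 : ℂ) * c = 0 := by
      simpa [Fin.sum_univ_three, zsmul_eq_mul] using hg
    have hexp : lam ^ (g 0) * lam' ^ (g 1) = 1 := by
      have := congrArg Complex.exp hsum
      rw [Complex.exp_add, Complex.exp_add, Complex.exp_int_mul, Complex.exp_int_mul,
        Complex.exp_int_mul, hel, hel', Complex.exp_zero] at this
      rwa [Complex.exp_two_pi_mul_I, one_zpow, mul_one] at this
    obtain ⟨h0, h1⟩ := h _ _ hexp
    have h2 : g 2 = 0 := by
      rw [h0, h1] at hsum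
      simp only [Int.cast_zero, zero_mul, zero_add] at hsum
      rcases mul_eq_zero.mp hsum with h' | h'
      · exact_mod_cast h'
      · exact absurd h' hc0
    intro i
    fin_cases i <;> assumption
  by_cases hd : ∀ ε : ℝ, 0 < ε → ∃ x ∈ H, x ≠ 0 ∧ ‖x‖ < ε
  · obtain ⟨u, hu1, hu⟩ := line_in_closure H hd
    refine ⟨u, by intro h0; rw [h0] at hu1; simp at hu1, fun r => ?_⟩
    rw [mul_comm]
    exact hexpcl _ (hu r)
  · -- discrete case: contradiction
    exfalso
    push_neg at hd
    obtain ⟨ε, hε, hsep⟩ := hd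
    have hdisc : DiscreteTopology H := by
      rw [discreteTopology_iff_isOpen_singleton_zero]
      have hset : ({0} : Set H) = (Subtype.val) ⁻¹' (Metric.ball (0:ℂ) ε) := by
        ext ⟨z, hz⟩
        simp only [Set.mem_singleton_iff, Set.mem_preimage, Metric.mem_ball, dist_zero_right]
        constructor
        · intro h0
          have hz0 : z = 0 := by
            have := congrArg (Subtype.val) h0
            simpa using this
          rw [hz0]; simpa using hε
        · intro hznorm
          by_contra h0
          have : z ≠ 0 := by simpa [Submodule.mk_eq_zero] using h0
          exact absurd hznorm (not_lt.mpr (hsep z hz this))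
      rw [hset]
      exact Metric.isOpen_ball.preimage continuous_subtype_val
    have hlre : l.re ≠ 0 := by
      rw [hl, Complex.log_re]
      exact (Real.log_pos hlam).ne'
    have hspan : Submodule.span ℝ (H : Set ℂ) = ⊤ := by
      rw [eq_top_iff]
      rintro z -
      have hlm : l ∈ Submodule.span ℝ (H : Set ℂ) :=
        Submodule.subset_span (Submodule.subset_span (by simp))
      have hcm : c ∈ Submodule.span ℝ (H : Set ℂ) :=
        Submodule.subset_span (Submodule.subset_span (by simp))
      have hz : z = (z.re / l.re) • l + ((z.im - (z.re / l.re) * l.im) / (2 * Real.pi)) • c := by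
        apply Complex.ext <;>
          simp only [Complex.add_re, Complex.add_im, Complex.real_smul, Complex.mul_re,
            Complex.mul_im, Complex.ofReal_re, Complex.ofReal_im, hc, Complex.mul_I_re,
            Complex.mul_I_im, Complex.I_re, Complex.I_im, Complex.re_ofNat, Complex.im_ofNat] <;>
          field_simp <;> ring
      rw [hz]
      exact Submodule.add_mem _ (Submodule.smul_mem _ _ hlm) (Submodule.smul_mem _ _ hcm)
    have hzl : IsZLattice ℝ H := ⟨hspan⟩
    have hrank : Module.finrank ℤ H = 2 := by
      rw [ZLattice.rank ℝ H, Complex.finrank_real_complex]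
    -- lift independence to H
    have hlH : l ∈ H := Submodule.subset_span (by simp)
    have hl'H : l' ∈ H := Submodule.subset_span (by simp)
    have hcH : c ∈ H := Submodule.subset_span (by simp)
    have hindepH : LinearIndependent ℤ ![(⟨l, hlH⟩ : H), ⟨l', hl'H⟩, ⟨c, hcH⟩] := by
      apply LinearIndependent.of_comp H.subtype
      convert hindep using 1
      ext i
      fin_cases i <;> rfl
    have := hindepH.fintype_card_le_finrank
    rw [hrank] at this
    simp at this
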